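/- Let C be a nonnegative n×n matrix with row-sum vector (r_1,...,r_n)^T, Π = {π_1,...,π_ℓ} a partition of {1,...,n} with n ∈ π_ℓ, and C' an n×n matrix admitting an equitable quotient matrix Π(C') with respect to Π such that: (i) C[−|n) ≤ C'[−|n) entrywise (all columns except the last), and Π(C') has row-sum vector with a-th entry equal to max_{i∈π_a} r_i; (ii) Π(C') has a positive rooted eigenvector for some nonnegative real eigenvalue λ'. Then ρ(C) ≤ λ'. -/

import Mathlib

/-- Spectral radius of a real square matrix: maximum modulus of its complex eigenvalues. -/
noncomputable def specRad {n : ℕ} (A : Matrix (Fin n) (Fin n) ℝ) : ℝ :=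
  ((A.map (fun x => (x : ℂ))).charpoly.roots.map (fun z => ‖z‖)).foldr max 0

/-- A vector is rooted if every entry is at least the last entry, which is nonnegative. -/
def Rooted {n : ℕ} (v : Fin (n + 1) → ℝ) : Prop :=
  0 ≤ v (Fin.last n) ∧ ∀ j, v (Fin.last n) ≤ v j

open Matrix Polynomial in
lemma exists_eigvec {m : ℕ} (A : Matrix (Fin m) (Fin m) ℂ) (μ : ℂ)
    (h : μ ∈ A.charpoly.roots) : ∃ w : Fin m → ℂ, w ≠ 0 ∧ A.mulVec w = μ • w := by
  have hroot : Polynomial.eval μ A.charpoly = 0 := (isRoot_of_mem_roots h)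
  have hmap : (charmatrix A).map (Polynomial.eval μ) = μ • (1 : Matrix (Fin m) (Fin m) ℂ) - A := by
    ext i j
    by_cases hij : i = j
    · subst hij; simp [charmatrix_apply_eq]
    · simp [charmatrix_apply_ne _ _ _ hij, Matrix.one_apply_ne hij]
  have hdet : (μ • (1 : Matrix (Fin m) (Fin m) ℂ) - A).det = 0 := by
    rw [← hmap]
    have := RingHom.map_det (Polynomial.evalRingHom μ) (charmatrix A)
    rw [Matrix.charpoly] at hroot
    simpa [RingHom.mapMatrix_apply] using this.symm.trans hroot
  obtain ⟨w, hw0, hw⟩ := (Matrix.exists_mulVec_eq_zero_iff).2 hdet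
  refine ⟨w, hw0, ?_⟩
  rw [Matrix.sub_mulVec, Matrix.smul_mulVec, Matrix.one_mulVec, sub_eq_zero] at hw
  exact hw.symm

lemma foldr_max_le (s : Multiset ℝ) (lam : ℝ) (h0 : 0 ≤ lam) (h : ∀ x ∈ s, x ≤ lam) :
    s.foldr max 0 ≤ lam := by
  induction s using Multiset.induction_on with
  | empty => simpa using h0
  | cons a s ih =>
    rw [Multiset.foldr_cons]
    exact max_le (h a (Multiset.mem_cons_self a s)) (ih fun x hx => h x (Multiset.mem_cons_of_mem hx))

lemma specRad_le_of_subinv {m : ℕ} (A : Matrix (Fin m) (Fin m) ℝ) (hA : ∀ i j, 0 ≤ A i j)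
    (lam : ℝ) (hlam : 0 ≤ lam) (v : Fin m → ℝ) (hv : ∀ i, 0 < v i)
    (hAv : ∀ i, A.mulVec v i ≤ lam * v i) : specRad A ≤ lam := by
  apply foldr_max_le _ _ hlam
  intro x hx
  simp only [Multiset.mem_map] at hx
  obtain ⟨μ, hμ, rfl⟩ := hx
  obtain ⟨w, hw0, hw⟩ := exists_eigvec _ μ hμ
  set g : Fin m → ℝ := fun i => ‖w i‖ with hg
  obtain ⟨j0, hj0⟩ := Function.ne_iff.1 hw0
  obtain ⟨i0, -, hi0⟩ := Finset.exists_max_image Finset.univ (fun i => g i / v i)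
    ⟨j0, Finset.mem_univ j0⟩
  have hdivpos : 0 < g i0 / v i0 :=
    lt_of_lt_of_le (div_pos (by simpa [hg] using hj0) (hv j0)) (hi0 j0 (Finset.mem_univ j0))
  have hgi0 : 0 < g i0 := by
    rcases div_pos_iff.mp hdivpos with ⟨h, -⟩ | ⟨-, h⟩
    · exact h
    · exact absurd (hv i0) (not_lt.2 h.le)
  have heq : μ * w i0 = ∑ j, (A i0 j : ℂ) * w j := by
    have := congrFun hw i0
    simp only [Matrix.mulVec, dotProduct, Pi.smul_apply, smul_eq_mul,
      Matrix.map_apply] at this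
    exact this.symm
  have hkey : ‖μ‖ * g i0 ≤ lam * g i0 := by
    calc ‖μ‖ * g i0 = ‖μ * w i0‖ := (norm_mul μ (w i0)).symm
      _ = ‖∑ j, (A i0 j : ℂ) * w j‖ := by rw [heq]
      _ ≤ ∑ j, ‖(A i0 j : ℂ) * w j‖ := norm_sum_le _ _
      _ = ∑ j, A i0 j * g j := by
          refine Finset.sum_congr rfl fun j _ => ?_
          rw [norm_mul, Complex.norm_real, Real.norm_of_nonneg (hA i0 j)]
      _ ≤ ∑ j, A i0 j * ((g i0 / v i0) * v j) := by
          refine Finset.sum_le_sum fun j _ => mul_le_mul_of_nonneg_left ?_ (hA i0 j)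
          exact (div_le_iff₀ (hv j)).1 (hi0 j (Finset.mem_univ j))
      _ = (g i0 / v i0) * ∑ j, A i0 j * v j := by
          rw [Finset.mul_sum]; refine Finset.sum_congr rfl fun j _ => by ring
      _ ≤ (g i0 / v i0) * (lam * v i0) := by
          refine mul_le_mul_of_nonneg_left ?_ hdivpos.le
          simpa [Matrix.mulVec, dotProduct] using hAv i0
      _ = lam * (g i0 / v i0 * v i0) := by ring
      _ = lam * g i0 := by rw [div_mul_cancel₀ _ (hv i0).ne']
  exact le_of_mul_le_mul_right hkey hgi0

theorem stmt_16 {n ℓ : ℕ}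
    (C : Matrix (Fin (n + 1)) (Fin (n + 1)) ℝ) (hC : ∀ i j, 0 ≤ C i j)
    (r : Fin (n + 1) → ℝ) (hrdef : ∀ i, r i = ∑ j, C i j)
    (π : Fin (n + 1) → Fin (ℓ + 1)) (hπ : Function.Surjective π)
    (hπlast : π (Fin.last n) = Fin.last ℓ)
    (S : Matrix (Fin (n + 1)) (Fin (ℓ + 1)) ℝ)
    (hS : S = Matrix.of fun j b => if π j = b then (1 : ℝ) else 0)
    (C' : Matrix (Fin (n + 1)) (Fin (n + 1)) ℝ)
    (B : Matrix (Fin (ℓ + 1)) (Fin (ℓ + 1)) ℝ)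
    (hquot : S * B = C' * S)
    (h1 : ∀ i j, j ≠ Fin.last n → C i j ≤ C' i j)
    (h1' : ∀ a : Fin (ℓ + 1), IsGreatest {x : ℝ | ∃ i, π i = a ∧ x = r i} (∑ b, B a b))
    (lam' : ℝ) (hlam' : 0 ≤ lam') (u : Fin (ℓ + 1) → ℝ)
    (hupos : ∀ b, 0 < u b) (hurooted : Rooted u)
    (heig : B.mulVec u = lam' • u) :
    specRad C ≤ lam' := by
  set v : Fin (n + 1) → ℝ := fun i => u (π i) with hv
  have hvpos : ∀ i, 0 < v i := fun i => hupos (π i)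
  have hSu : S.mulVec u = v := by
    funext i
    simp [hS, Matrix.mulVec, dotProduct, ite_mul, hv]
  have hC'v : C'.mulVec v = lam' • v := by
    rw [← hSu, Matrix.mulVec_mulVec, ← hquot, ← Matrix.mulVec_mulVec, heig,
      Matrix.mulVec_smul, hSu]
  have hrow : ∀ i, ∑ j, C' i j = ∑ b, B (π i) b := by
    intro i
    have h2 : ∑ b, (C' * S) i b = ∑ j, C' i j := by
      simp only [Matrix.mul_apply]
      rw [Finset.sum_comm]
      refine Finset.sum_congr rfl fun j _ => ?_
      rw [← Finset.mul_sum]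
      simp [hS]
    have h3 : ∑ b, (S * B) i b = ∑ b, B (π i) b := by
      simp only [Matrix.mul_apply]
      refine Finset.sum_congr rfl fun b _ => ?_
      simp [hS, ite_mul]
    rw [← h2, ← hquot, h3]
  set un := u (Fin.last ℓ) with hun
  have hvlast : v (Fin.last n) = un := by simp [hv, hπlast, hun]
  have hun0 : 0 ≤ un := (hupos _).le
  have hsub : ∀ j, 0 ≤ v j - un := fun j => sub_nonneg.2 (hurooted.2 (π j))
  apply specRad_le_of_subinv C hC lam' hlam' v hvpos
  intro i
  have hC'vi : ∑ j, C' i j * v j = lam' * v i := by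
    have := congrFun hC'v i
    simpa [Matrix.mulVec, dotProduct] using this
  have hCvi : C.mulVec v i = ∑ j, C i j * v j := by
    simp [Matrix.mulVec, dotProduct]
  rw [hCvi, ← hC'vi]
  have split : ∀ (M : Matrix (Fin (n + 1)) (Fin (n + 1)) ℝ),
      ∑ j, M i j * v j = (∑ j, M i j) * un + ∑ j, M i j * (v j - un) := by
    intro M
    rw [Finset.sum_mul, ← Finset.sum_add_distrib]
    exact Finset.sum_congr rfl fun j _ => by ring
  rw [split C, split C']
  refine add_le_add ?_ ?_
  · refine mul_le_mul_of_nonneg_right ?_ hun0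
    calc ∑ j, C i j = r i := (hrdef i).symm
      _ ≤ ∑ b, B (π i) b := (h1' (π i)).2 ⟨i, rfl, rfl⟩
      _ = ∑ j, C' i j := (hrow i).symm
  · refine Finset.sum_le_sum fun j _ => ?_
    by_cases hj : j = Fin.last n
    · subst hj; rw [hvlast]; simp
    · exact mul_le_mul_of_nonneg_right (h1 i j hj) (hsub j)
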